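/- The rewriting rule ⊗⅋4: (X⅋Y)⊗(U⅋V) ⇝ (X⊗U)⅋(Y⊗V) does not preserve the proof-net correctness criterion: for B = {a—a⊥, b—b⊥} and R = (a ⅋̂ a⊥) ⊗̂ (b ⅋̂ b⊥), the structure (B,R) is a correct proof net, but after applying ⊗⅋4 to obtain R' = (a ⊗̂ b) ⅋̂ (a⊥ ⊗̂ b⊥), the structure (B,R') contains a chordless alternating elementary circuit (namely a, a⊥, b⊥, b). -/

import Mathlib

/-- Terms denoting dicographs. -/
inductive DTerm (V : Type) : Type
  | leaf : V → DTerm V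
  | par : DTerm V → DTerm V → DTerm V
  | tens : DTerm V → DTerm V → DTerm V
  | seq : DTerm V → DTerm V → DTerm V

namespace DTerm

def leaves {V : Type} : DTerm V → List V
  | leaf v => [v]
  | par s t => leaves s ++ leaves t
  | tens s t => leaves s ++ leaves t
  | seq s t => leaves s ++ leaves t

/-- The dicograph denoted by a term. -/
def rel {V : Type} : DTerm V → V → V → Prop
  | leaf _ => fun _ _ => False
  | par s t => fun a b => rel s a b ∨ rel t a b
  | tens s t => fun a b =>
      rel s a b ∨ rel t a b ∨ (a ∈ leaves s ∧ b ∈ leaves t) ∨ (a ∈ leaves t ∧ b ∈ leaves s)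
  | seq s t => fun a b => rel s a b ∨ rel t a b ∨ (a ∈ leaves s ∧ b ∈ leaves t)

end DTerm

section Correctness

variable {V : Type} [Inhabited V]

/-- `l` is an alternating elementary circuit of the proof structure with axiom matching
`b` and dicograph `R`: a nonempty cycle of even length without repeated vertices whose
steps alternately follow a `B` (axiom) edge and an `R` pair (an `R` edge in either
direction or an `R` arc forwards — i.e. exactly `R x y` allows the step `x` to `y`). -/
def IsAECircuit (b : V → V) (R : V → V → Prop) (l : List V) : Prop :=
  l ≠ [] ∧ l.length % 2 = 0 ∧ l.Nodup ∧
    ∀ i : ℕ, i < l.length →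
      (i % 2 = 0 → b (l.getD i default) = l.getD ((i + 1) % l.length) default) ∧
      (i % 2 = 1 → R (l.getD i default) (l.getD ((i + 1) % l.length) default))

/-- `(x, y)` is one of the (directed) steps of the circuit `l`. -/
def CircStep (l : List V) (x y : V) : Prop :=
  ∃ i : ℕ, i < l.length ∧ l.getD i default = x ∧ l.getD ((i + 1) % l.length) default = y

/-- The circuit `l` has a chord: an `R` edge or arc between two of its vertices which is
neither a step of the circuit nor the reverse of one. -/
def HasChord (R : V → V → Prop) (l : List V) : Prop :=
  ∃ x ∈ l, ∃ y ∈ l, R x y ∧ ¬ CircStep l x y ∧ ¬ CircStep l y x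

/-- The correctness criterion for handsome proof structures: every alternating
elementary circuit has a chord. -/
def Correct (b : V → V) (R : V → V → Prop) : Prop :=
  ∀ l : List V, IsAECircuit b R l → HasChord R l

end Correctness

open DTerm

/-- Atoms: `a = 0`, `a⊥ = 1`, `b = 2`, `b⊥ = 3`; the axiom matching `B`. -/
def bMatch : Fin 4 → Fin 4 := ![1, 0, 3, 2]

/-- `R = (a ⅋̂ a⊥) ⊗̂ (b ⅋̂ b⊥)`. -/
def R16 : DTerm (Fin 4) :=
  tens (par (leaf 0) (leaf 1)) (par (leaf 2) (leaf 3))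

/-- `R' = (a ⊗̂ b) ⅋̂ (a⊥ ⊗̂ b⊥)`, the result of applying `⊗⅋4`. -/
def R16' : DTerm (Fin 4) :=
  par (tens (leaf 0) (leaf 2)) (tens (leaf 1) (leaf 3))


section Aux

def relDec {V : Type} [DecidableEq V] : (t : DTerm V) → (a b : V) → Decidable (rel t a b)
  | DTerm.leaf _, _, _ => .isFalse fun h => h
  | DTerm.par s t, a, b => @instDecidableOr _ _ (relDec s a b) (relDec t a b)
  | DTerm.tens s t, a, b =>
      @instDecidableOr _ _ (relDec s a b) (@instDecidableOr _ _ (relDec t a b) inferInstance)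
  | DTerm.seq s t, a, b =>
      @instDecidableOr _ _ (relDec s a b) (@instDecidableOr _ _ (relDec t a b) inferInstance)

instance {V : Type} [DecidableEq V] (t : DTerm V) (a b : V) : Decidable (rel t a b) :=
  relDec t a b

instance {V : Type} [Inhabited V] [DecidableEq V] (l : List V) (x y : V) :
    Decidable (CircStep l x y) := by
  refine decidable_of_iff (∃ i ∈ List.range l.length,
    l.getD i default = x ∧ l.getD ((i + 1) % l.length) default = y) ?_
  unfold CircStep
  simp

instance {V : Type} [Inhabited V] [DecidableEq V] (b : V → V) (t : DTerm V) (l : List V) :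
    Decidable (IsAECircuit b (rel t) l) := by
  unfold IsAECircuit; infer_instance

instance {V : Type} [Inhabited V] [DecidableEq V] (t : DTerm V) (l : List V) :
    Decidable (HasChord (rel t) l) := by
  unfold HasChord; infer_instance

lemma key2 : ∀ x y : Fin 4,
    IsAECircuit bMatch (rel R16) [x, y] → HasChord (rel R16) [x, y] := by decide

lemma key4 : ∀ x y z w : Fin 4,
    IsAECircuit bMatch (rel R16) [x, y, z, w] → HasChord (rel R16) [x, y, z, w] := by decide

end Aux

/-- the rule `⊗⅋4` does not preserve correctness: `(B, R)` is a correct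
proof net, but `(B, R')` contains the chordless alternating elementary circuit
`a, a⊥, b⊥, b`. -/
theorem tp4_breaks_correctness :
    Correct bMatch (rel R16) ∧
    IsAECircuit bMatch (rel R16') [0, 1, 3, 2] ∧
    ¬ HasChord (rel R16') [0, 1, 3, 2] ∧
    ¬ Correct bMatch (rel R16') := by
  refine ⟨?_, by decide, by decide, ?_⟩
  · intro l hl
    have hlen : l.length ≤ 4 := by
      simpa using hl.2.2.1.length_le_card
    obtain ⟨hne, hmod, hnd, hstep⟩ := hl
    rcases l with _ | ⟨x, l⟩
    · exact absurd rfl hne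
    rcases l with _ | ⟨y, l⟩
    · simp at hmod
    rcases l with _ | ⟨z, l⟩
    · exact key2 x y ⟨hne, hmod, hnd, hstep⟩
    rcases l with _ | ⟨w, l⟩
    · simp only [List.length_cons, List.length_nil] at hmod; omega
    rcases l with _ | ⟨v, l⟩
    · exact key4 x y z w ⟨hne, hmod, hnd, hstep⟩
    · simp at hlen; omega
  · intro h
    exact (by decide : ¬ HasChord (rel R16') [0, 1, 3, 2])
      (h [0, 1, 3, 2] (by decide))
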